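/- If there exists a compact set K ⊆ [0,1]^d intersecting every (d−1)-dimensional affine subspace (hyperplane) that meets [0,1]^d, with the ℓ-fold sumset ℓK nowhere dense in ℝ^d, then there exists a compact set K' ⊆ [0,1]^{d+1} intersecting every d-dimensional affine subspace (hyperplane) that meets [0,1]^{d+1}, with the (ℓ+1)-fold sumset (ℓ+1)K' nowhere dense in ℝ^{d+1}. -/

import Mathlib

open Set Module

/-- The unit cube `[0,1]^d`. -/
def unitCube (d : ℕ) : Set (EuclideanSpace ℝ (Fin d)) :=
  {x | ∀ i, x i ∈ Set.Icc (0 : ℝ) 1}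

/-- The `ℓ`-fold sumset `ℓK = {k₁ + ⋯ + k_ℓ : kᵢ ∈ K}`. -/
def msum {E : Type*} [AddCommMonoid E] (ℓ : ℕ) (K : Set E) : Set E :=
  {x | ∃ f : Fin ℓ → E, (∀ i, f i ∈ K) ∧ ∑ i, f i = x}

namespace StepUpAux

noncomputable section

abbrev Ed (n : ℕ) := EuclideanSpace ℝ (Fin n)

/-- projection forgetting the last coordinate, as a linear map -/
def Pj (d : ℕ) : Ed (d+1) →ₗ[ℝ] Ed d :=
  (WithLp.linearEquiv 2 ℝ (Fin d → ℝ)).symm.toLinearMap ∘ₗ LinearMap.funLeft ℝ ℝ Fin.castSucc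
    ∘ₗ (WithLp.linearEquiv 2 ℝ (Fin (d+1) → ℝ)).toLinearMap

/-- last coordinate, as a linear map -/
def Hj (d : ℕ) : Ed (d+1) →ₗ[ℝ] ℝ :=
  LinearMap.proj (Fin.last d) ∘ₗ (WithLp.linearEquiv 2 ℝ (Fin (d+1) → ℝ)).toLinearMap

/-- `Fin.snoc` on Euclidean vectors -/
def sn {d : ℕ} (x : Ed d) (t : ℝ) : Ed (d+1) := WithLp.toLp 2 (Fin.snoc (x : Fin d → ℝ) t)

theorem Pj_snoc (d : ℕ) (x : Ed d) (t : ℝ) : Pj d (sn x t) = x := by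
  ext i
  show (Fin.snoc x t : Fin (d+1) → ℝ) i.castSucc = x i
  simp

theorem Hj_snoc (d : ℕ) (x : Ed d) (t : ℝ) : Hj d (sn x t) = t := by
  show (Fin.snoc x t : Fin (d+1) → ℝ) (Fin.last d) = t
  simp

theorem Pj_apply (d : ℕ) (y : Ed (d+1)) (i : Fin d) : Pj d y i = y i.castSucc := rfl
theorem Hj_apply (d : ℕ) (y : Ed (d+1)) : Hj d y = y (Fin.last d) := rfl

theorem snoc_eq (d : ℕ) (y : Ed (d+1)) : (sn (Pj d y) (Hj d y) : Ed (d+1)) = y := by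
  ext i
  refine Fin.lastCases ?_ ?_ i
  · show (Fin.snoc (Pj d y) (Hj d y) : Fin (d+1) → ℝ) (Fin.last d) = y (Fin.last d)
    simp [Hj, LinearMap.proj]
  · intro j
    show (Fin.snoc (Pj d y) (Hj d y) : Fin (d+1) → ℝ) j.castSucc = y j.castSucc
    simp only [Fin.snoc_castSucc]
    rfl

theorem Pj_surj (d : ℕ) : Function.Surjective (Pj d) :=
  fun x => ⟨sn x 0, Pj_snoc d x 0⟩

theorem Hj_surj (d : ℕ) : Function.Surjective (Hj d) :=
  fun t => ⟨sn 0 t, Hj_snoc d 0 t⟩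

/-- the embedding `x ↦ (x, 0)` as a linear map -/
def Jl (d : ℕ) : Ed d →ₗ[ℝ] Ed (d+1) where
  toFun x := sn x 0
  map_add' x y := by
    have hadd : ∀ (u v : Ed (d+1)) (i : Fin (d+1)), (u + v) i = u i + v i := fun _ _ _ => rfl
    ext i
    rw [hadd]
    refine Fin.lastCases ?_ ?_ i
    · show (Fin.snoc (x + y) 0 : Fin (d+1) → ℝ) (Fin.last d)
        = (Fin.snoc x 0 : Fin (d+1) → ℝ) (Fin.last d) + (Fin.snoc y 0 : Fin (d+1) → ℝ) (Fin.last d)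
      simp
    · intro j
      show (Fin.snoc (x + y) 0 : Fin (d+1) → ℝ) j.castSucc
        = (Fin.snoc x 0 : Fin (d+1) → ℝ) j.castSucc + (Fin.snoc y 0 : Fin (d+1) → ℝ) j.castSucc
      simp only [Fin.snoc_castSucc]
      rfl
  map_smul' c x := by
    have hsmul : ∀ (a : ℝ) (u : Ed (d+1)) (i : Fin (d+1)), (a • u) i = a * u i := fun _ _ _ => rfl
    ext i
    show _ = (c • (sn x 0 : Ed (d+1))) i
    rw [hsmul]
    refine Fin.lastCases ?_ ?_ i
    · show (Fin.snoc (c • x) 0 : Fin (d+1) → ℝ) (Fin.last d)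
        = c * (Fin.snoc x 0 : Fin (d+1) → ℝ) (Fin.last d)
      simp
    · intro j
      show (Fin.snoc (c • x) 0 : Fin (d+1) → ℝ) j.castSucc
        = c * (Fin.snoc x 0 : Fin (d+1) → ℝ) j.castSucc
      simp only [Fin.snoc_castSucc]
      rfl

theorem Jl_apply (d : ℕ) (x : Ed d) : Jl d x = sn x 0 := rfl

theorem Jl_last (d : ℕ) (x : Ed d) : Jl d x (Fin.last d) = 0 := by
  show (Fin.snoc x 0 : Fin (d+1) → ℝ) (Fin.last d) = 0
  simp

theorem Jl_castSucc (d : ℕ) (x : Ed d) (j : Fin d) : Jl d x j.castSucc = x j := by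
  show (Fin.snoc x 0 : Fin (d+1) → ℝ) j.castSucc = x j
  simp

/-- the last basis vector -/
def elast (d : ℕ) : Ed (d+1) := sn 0 1

theorem elast_last (d : ℕ) : elast d (Fin.last d) = 1 := by
  show (Fin.snoc 0 1 : Fin (d+1) → ℝ) (Fin.last d) = 1
  simp

theorem elast_castSucc (d : ℕ) (j : Fin d) : elast d j.castSucc = 0 := by
  show (Fin.snoc (0 : Ed d) 1 : Fin (d+1) → ℝ) j.castSucc = 0
  rw [Fin.snoc_castSucc]
  rfl

theorem unitCube_compact (n : ℕ) : IsCompact (unitCube n) := by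
  have h1 : IsCompact (Set.univ.pi fun _ : Fin n => Set.Icc (0:ℝ) 1) :=
    isCompact_univ_pi fun _ => isCompact_Icc
  have h2 : unitCube n =
      (PiLp.continuousLinearEquiv 2 ℝ (fun _ : Fin n => ℝ)).symm ''
        (Set.univ.pi fun _ : Fin n => Set.Icc (0:ℝ) 1) := by
    ext x
    constructor
    · intro hx; exact ⟨x, fun i _ => hx i, rfl⟩
    · rintro ⟨y, hy, rfl⟩ i; exact hy i (mem_univ i)
  rw [h2]
  exact h1.image (PiLp.continuousLinearEquiv 2 ℝ _).symm.continuous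

theorem unitCube_convex (n : ℕ) : Convex ℝ (unitCube n) := by
  intro x hx y hy a b ha hb hab i
  have : (a • x + b • y) i = a * x i + b * y i := by
    simp [PiLp.add_apply, PiLp.smul_apply, smul_eq_mul]
  rw [this]
  exact convex_Icc (0:ℝ) 1 (hx i) (hy i) ha hb hab

theorem exists_functional {E : Type*} [NormedAddCommGroup E] [NormedSpace ℝ E]
    [FiniteDimensional ℝ E] (W : Submodule ℝ E) (hW : finrank ℝ W + 1 = finrank ℝ E) :
    ∃ f : E →ₗ[ℝ] ℝ, f ≠ 0 ∧ LinearMap.ker f = W := by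
  have hq : finrank ℝ (E ⧸ W) = 1 := by
    have := Submodule.finrank_quotient_add_finrank W
    omega
  obtain ⟨e⟩ : Nonempty ((E ⧸ W) ≃ₗ[ℝ] ℝ) :=
    FiniteDimensional.nonempty_linearEquiv_of_finrank_eq (by rw [hq, finrank_self])
  refine ⟨e.toLinearMap.comp W.mkQ, ?_, ?_⟩
  · intro h0
    have : W = ⊤ := by
      have : LinearMap.ker (e.toLinearMap.comp W.mkQ) = ⊤ := by
        rw [h0]; exact LinearMap.ker_zero
      rwa [LinearMap.ker_comp, LinearMap.ker_eq_bot.mpr e.injective, Submodule.comap_bot,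
        Submodule.ker_mkQ] at this
    rw [this, finrank_top] at hW; omega
  · rw [LinearMap.ker_comp, LinearMap.ker_eq_bot.mpr e.injective, Submodule.comap_bot,
      Submodule.ker_mkQ]

theorem ker_rank {E : Type*} [NormedAddCommGroup E] [NormedSpace ℝ E]
    [FiniteDimensional ℝ E] (g : E →ₗ[ℝ] ℝ) (hg : g ≠ 0) :
    finrank ℝ (LinearMap.ker g) + 1 = finrank ℝ E := by
  have hsurj : Function.Surjective g := by
    obtain ⟨x, hx⟩ : ∃ x, g x ≠ 0 := by
      by_contra hcon; push_neg at hcon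
      exact hg (by ext x; simpa using hcon x)
    intro c
    exact ⟨(c / g x) • x, by simp [map_smul, div_mul_cancel₀ c hx, smul_eq_mul]⟩
  have hrange : LinearMap.range g = ⊤ := LinearMap.range_eq_top.mpr hsurj
  have := g.finrank_range_add_finrank_ker
  rw [hrange, finrank_top, finrank_self] at this
  omega

theorem nwd_preimage {E F : Type*} [TopologicalSpace E] [TopologicalSpace F]
    {φ : E → F} (hc : Continuous φ) (ho : IsOpenMap φ) {C : Set F} (hC : IsClosed C)
    (hCi : interior C = ∅) : IsNowhereDense (φ ⁻¹' C) := by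
  have hcl : IsClosed (φ ⁻¹' C) := hC.preimage hc
  rw [hcl.isNowhereDense_iff]
  by_contra hne
  obtain ⟨x, hx⟩ := nonempty_iff_ne_empty.mpr hne
  have hsub : φ '' interior (φ ⁻¹' C) ⊆ C := by
    rintro _ ⟨y, hy, rfl⟩; exact (interior_subset hy : _ ∈ φ ⁻¹' C)
  have hop : IsOpen (φ '' interior (φ ⁻¹' C)) := ho _ isOpen_interior
  have h2 : φ '' interior (φ ⁻¹' C) ⊆ interior C := hop.subset_interior_iff.mpr hsub
  rw [hCi] at h2
  exact h2 ⟨x, hx, rfl⟩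

theorem nwd_union {X : Type*} [TopologicalSpace X] {s t : Set X}
    (hs : IsClosed s) (ht : IsClosed t) (hsi : interior s = ∅) (hti : interior t = ∅) :
    interior (s ∪ t) = ∅ := by
  by_contra hne
  set U := interior (s ∪ t) with hU
  have hUo : IsOpen U := isOpen_interior
  have hUsub : U ⊆ s ∪ t := interior_subset
  have h1 : U ∩ sᶜ ⊆ t := by
    rintro x ⟨hx1, hx2⟩
    rcases hUsub hx1 with h | h
    · exact absurd h hx2
    · exact h
  have h2 : U ∩ sᶜ ⊆ interior t :=
    (hUo.inter hs.isOpen_compl).subset_interior_iff.mpr h1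
  rw [hti, subset_empty_iff] at h2
  have h3 : U ⊆ s := by
    intro x hx
    by_contra hxs
    exact absurd (show x ∈ U ∩ sᶜ from ⟨hx, hxs⟩) (by rw [h2]; exact notMem_empty x)
  have h4 : U ⊆ interior s := hUo.subset_interior_iff.mpr h3
  rw [hsi, subset_empty_iff] at h4
  exact hne (by rw [hU] at h4 ⊢; exact h4)

end

end StepUpAux

open StepUpAux

/-- If there is a compact `K ⊆ [0,1]^d` meeting every hyperplane that meets the cube
with `ℓK` nowhere dense, then there is a compact `K' ⊆ [0,1]^{d+1}` meeting every
hyperplane that meets the cube with `(ℓ+1)K'` nowhere dense. -/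
theorem step_up_dimension (d ℓ : ℕ) (hd : 2 ≤ d) (hℓ : 2 ≤ ℓ)
    (h : ∃ K : Set (EuclideanSpace ℝ (Fin d)),
      IsCompact K ∧ K ⊆ unitCube d ∧
      (∀ V : AffineSubspace ℝ (EuclideanSpace ℝ (Fin d)), V ≠ ⊥ →
        finrank ℝ V.direction = d - 1 →
        ((V : Set _) ∩ unitCube d).Nonempty → (K ∩ (V : Set _)).Nonempty) ∧
      IsNowhereDense (msum ℓ K)) :
    ∃ K' : Set (EuclideanSpace ℝ (Fin (d + 1))),
      IsCompact K' ∧ K' ⊆ unitCube (d + 1) ∧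
      (∀ V : AffineSubspace ℝ (EuclideanSpace ℝ (Fin (d + 1))), V ≠ ⊥ →
        finrank ℝ V.direction = d →
        ((V : Set _) ∩ unitCube (d + 1)).Nonempty → (K' ∩ (V : Set _)).Nonempty) ∧
      IsNowhereDense (msum (ℓ + 1) K') := by
  classical
  obtain ⟨K, hKc, hKcube, hKhyp, hKnwd⟩ := h
  have hdim : finrank ℝ (Ed d) = d := finrank_euclideanSpace_fin
  have hPc : Continuous (Pj d) := (Pj d).continuous_of_finiteDimensional
  have hHc : Continuous (Hj d) := (Hj d).continuous_of_finiteDimensional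
  -- a point of K
  obtain ⟨p, hpK, -⟩ : ∃ p, p ∈ K ∧ p ∈ (AffineSubspace.mk' (0 : Ed d)
      (LinearMap.ker (LinearMap.proj (R := ℝ) (φ := fun _ : Fin d => ℝ)
        (⟨0, by omega⟩ : Fin d) ∘ₗ (WithLp.linearEquiv 2 ℝ (Fin d → ℝ)).toLinearMap)) : Set (Ed d)) := by
    set g₀ : Ed d →ₗ[ℝ] ℝ :=
      LinearMap.proj (R := ℝ) (φ := fun _ : Fin d => ℝ) (⟨0, by omega⟩ : Fin d) ∘ₗ (WithLp.linearEquiv 2 ℝ (Fin d → ℝ)).toLinearMap with hg₀def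
    have hg₀ : g₀ ≠ 0 := by
      intro h0
      have h1 : g₀ (WithLp.toLp 2 (fun _ => 1 : Fin d → ℝ) : Ed d) = 1 := rfl
      rw [h0] at h1
      simpa using h1
    have h0cube : (0 : Ed d) ∈ unitCube d := by
      intro i
      have : (0 : Ed d) i = 0 := rfl
      rw [this]; exact ⟨le_refl 0, zero_le_one⟩
    obtain ⟨q, hq1, hq2⟩ := hKhyp (AffineSubspace.mk' (0 : Ed d) (LinearMap.ker g₀))
      ((AffineSubspace.nonempty_iff_ne_bot _).mp ⟨0, AffineSubspace.self_mem_mk' _ _⟩)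
      (by rw [AffineSubspace.direction_mk']
          have h2 := ker_rank g₀ hg₀
          rw [hdim] at h2
          exact Nat.eq_sub_of_add_eq h2)
      ⟨0, AffineSubspace.self_mem_mk' _ _, h0cube⟩
    exact ⟨q, hq1, hq2⟩
  set A : Set (Ed (d+1)) := Pj d ⁻¹' K ∩ Hj d ⁻¹' {0, 1} with hAdef
  set B : Set (Ed (d+1)) := Pj d ⁻¹' {p} ∩ Hj d ⁻¹' Icc (0:ℝ) 1 with hBdef
  have hAcl : IsClosed A :=
    (hKc.isClosed.preimage hPc).inter
      (((Set.finite_singleton (1:ℝ)).insert 0).isClosed.preimage hHc)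
  have hBcl : IsClosed B :=
    (isClosed_singleton.preimage hPc).inter (isClosed_Icc.preimage hHc)
  have hsubcube : A ∪ B ⊆ unitCube (d+1) := by
    rintro y (⟨h1, h2⟩ | ⟨h1, h2⟩) i
    · simp only [mem_preimage, Set.mem_insert_iff, Set.mem_singleton_iff] at h1 h2
      refine Fin.lastCases ?_ ?_ i
      · rw [← Hj_apply d y]
        rcases h2 with h | h <;> rw [h]
        · exact ⟨le_refl 0, zero_le_one⟩
        · exact ⟨zero_le_one, le_refl 1⟩
      · intro j
        rw [← Pj_apply d y j]
        exact hKcube h1 j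
    · simp only [mem_preimage, Set.mem_singleton_iff] at h1 h2
      refine Fin.lastCases ?_ ?_ i
      · rw [← Hj_apply d y]; exact h2
      · intro j
        rw [← Pj_apply d y j, h1]
        exact hKcube hpK j
  refine ⟨A ∪ B, ?_, hsubcube, ?_, ?_⟩
  · exact (unitCube_compact (d+1)).of_isClosed_subset (hAcl.union hBcl) hsubcube
  · -- hyperplane property
    intro V hVbot hVrank hVcube
    obtain ⟨z, hzV, hzcube⟩ := hVcube
    obtain ⟨f, hf0, hfker⟩ := exists_functional V.direction
      (by rw [hVrank, finrank_euclideanSpace_fin])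
    have hmemV : ∀ y, y ∈ V ↔ f y = f z := by
      intro y
      rw [← AffineSubspace.vsub_right_mem_direction_iff_mem hzV y, ← hfker,
        LinearMap.mem_ker]
      show f (y - z) = 0 ↔ _
      rw [map_sub, sub_eq_zero]
    set g : Ed d →ₗ[ℝ] ℝ := f.comp (Jl d) with hgdef
    set a : ℝ := f (elast d) with hadef
    have hdecomp : ∀ y : Ed (d+1), f y = g (Pj d y) + Hj d y * a := by
      intro y
      have hy : y = Jl d (Pj d y) + Hj d y • elast d := by
        have hadd : ∀ (u v : Ed (d+1)) (i : Fin (d+1)), (u + v) i = u i + v i :=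
          fun _ _ _ => rfl
        have hsmul : ∀ (c : ℝ) (u : Ed (d+1)) (i : Fin (d+1)), (c • u) i = c * u i :=
          fun _ _ _ => rfl
        ext i
        rw [hadd, hsmul]
        refine Fin.lastCases ?_ ?_ i
        · rw [Jl_last, elast_last, ← Hj_apply d y]; ring
        · intro j
          rw [Jl_castSucc, elast_castSucc, ← Pj_apply d y j]; ring
      conv_lhs => rw [hy]
      rw [map_add, map_smul, smul_eq_mul]
      rfl
    have hsnocf : ∀ (x : Ed d) (t : ℝ), f (sn x t) = g x + t * a := by
      intro x t
      rw [hdecomp, Pj_snoc, Hj_snoc]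
    have hzpcube : Pj d z ∈ unitCube d := by
      intro i; rw [Pj_apply]; exact hzcube i.castSucc
    have hzt : Hj d z ∈ Icc (0:ℝ) 1 := by rw [Hj_apply]; exact hzcube (Fin.last d)
    by_cases ha : a = 0
    · -- vertical hyperplane
      have hg0 : g ≠ 0 := by
        intro h0; apply hf0
        ext y; rw [hdecomp y, h0, ha]; simp
      obtain ⟨q, hqK, hqV'⟩ := hKhyp (AffineSubspace.mk' (Pj d z) (LinearMap.ker g))
        ((AffineSubspace.nonempty_iff_ne_bot _).mp ⟨_, AffineSubspace.self_mem_mk' _ _⟩)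
        (by rw [AffineSubspace.direction_mk']
            have h2 := ker_rank g hg0
            rw [hdim] at h2
            exact Nat.eq_sub_of_add_eq h2)
        ⟨Pj d z, AffineSubspace.self_mem_mk' _ _, hzpcube⟩
      have hgq : g q = g (Pj d z) := by
        have h1 := AffineSubspace.mem_mk'.mp hqV'
        rw [LinearMap.mem_ker] at h1
        have : g (q - Pj d z) = 0 := h1
        rw [map_sub, sub_eq_zero] at this
        exact this
      refine ⟨sn q 0, Or.inl ⟨?_, ?_⟩, ?_⟩
      · rw [mem_preimage, Pj_snoc]; exact hqK
      · rw [mem_preimage, Hj_snoc]; exact Or.inl rfl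
      · rw [AffineSubspace.mem_coe, hmemV, hsnocf, hdecomp z, ha, hgq]; ring
    · -- graph hyperplane
      set α : Ed d → ℝ := fun x => (f z - g x) / a with hαdef
      have hchar : ∀ (x : Ed d) (t : ℝ), (sn x t : Ed (d+1)) ∈ V ↔ t = α x := by
        intro x t
        rw [hmemV, hsnocf]
        constructor
        · intro he
          show t = (f z - g x) / a
          rw [eq_div_iff ha]; linarith
        · intro he
          have h1 : t * a = f z - g x := by
            rw [he]
            show (f z - g x) / a * a = f z - g x
            field_simp
          linarith
      have hαz : α (Pj d z) = Hj d z := by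
        have hz' : (sn (Pj d z) (Hj d z) : Ed (d+1)) ∈ V := by
          rw [snoc_eq]; exact hzV
        exact ((hchar _ _).mp hz').symm
      by_cases hp : α p ∈ Icc (0:ℝ) 1
      · refine ⟨sn p (α p), Or.inr ⟨?_, ?_⟩, ?_⟩
        · rw [mem_preimage, Pj_snoc]; rfl
        · rw [mem_preimage, Hj_snoc]; exact hp
        · rw [AffineSubspace.mem_coe, hchar]
      · have hg0 : g ≠ 0 := by
          intro h0; apply hp
          have he : α p = α (Pj d z) := by rw [hαdef]; simp [h0]
          rw [he, hαz]; exact hzt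
        have hαc : Continuous α := by
          apply Continuous.div_const
          exact continuous_const.sub g.continuous_of_finiteDimensional
        obtain ⟨c', hc'01, x₁, hx₁cube, hx₁α⟩ :
            ∃ c' ∈ ({0, 1} : Set ℝ), ∃ x₁ ∈ unitCube d, α x₁ = c' := by
          set γ : ℝ → Ed d := fun s => (1 - s) • Pj d z + s • p with hγdef
          have hγc : Continuous (α ∘ γ) := by
            apply hαc.comp
            exact ((continuous_const.sub continuous_id).smul continuous_const).add
              (continuous_id.smul continuous_const)
          have hγ0 : (α ∘ γ) 0 = Hj d z := by
            have : γ 0 = Pj d z := by rw [hγdef]; simp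
            simp only [Function.comp_apply, this, hαz]
          have hγ1 : (α ∘ γ) 1 = α p := by
            have : γ 1 = p := by rw [hγdef]; simp
            simp only [Function.comp_apply, this]
          have hγcube : ∀ s ∈ Icc (0:ℝ) 1, γ s ∈ unitCube d := by
            intro s hs
            exact unitCube_convex d hzpcube (hKcube hpK)
              (by linarith [hs.2]) hs.1 (by ring)
          rw [Set.mem_Icc, not_and_or] at hp
          rcases hp with hp | hp
          · push_neg at hp
            have h0m : (0:ℝ) ∈ Icc ((α ∘ γ) 1) ((α ∘ γ) 0) := by
              rw [hγ0, hγ1]; exact ⟨le_of_lt hp, hzt.1⟩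
            obtain ⟨s, hs, hsval⟩ := intermediate_value_Icc' zero_le_one
              hγc.continuousOn h0m
            exact ⟨0, Or.inl rfl, γ s, hγcube s hs, hsval⟩
          · push_neg at hp
            have h1m : (1:ℝ) ∈ Icc ((α ∘ γ) 0) ((α ∘ γ) 1) := by
              rw [hγ0, hγ1]; exact ⟨hzt.2, le_of_lt hp⟩
            obtain ⟨s, hs, hsval⟩ := intermediate_value_Icc zero_le_one
              hγc.continuousOn h1m
            exact ⟨1, Or.inr rfl, γ s, hγcube s hs, hsval⟩
        obtain ⟨q, hqK, hqV'⟩ := hKhyp (AffineSubspace.mk' x₁ (LinearMap.ker g))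
          ((AffineSubspace.nonempty_iff_ne_bot _).mp ⟨_, AffineSubspace.self_mem_mk' _ _⟩)
          (by rw [AffineSubspace.direction_mk']
              have h2 := ker_rank g hg0
              rw [hdim] at h2
              exact Nat.eq_sub_of_add_eq h2)
          ⟨x₁, AffineSubspace.self_mem_mk' _ _, hx₁cube⟩
        have hgq : g q = g x₁ := by
          have h1 := AffineSubspace.mem_mk'.mp hqV'
          rw [LinearMap.mem_ker] at h1
          have : g (q - x₁) = 0 := h1
          rw [map_sub, sub_eq_zero] at this
          exact this
        have hαq : α q = c' := by
          rw [← hx₁α, hαdef]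
          simp only [hgq]
        refine ⟨sn q c', Or.inl ⟨?_, ?_⟩, ?_⟩
        · rw [mem_preimage, Pj_snoc]; exact hqK
        · rw [mem_preimage, Hj_snoc]; exact hc'01
        · rw [AffineSubspace.mem_coe, hchar, hαq]
  · -- nowhere dense
    have hPopen : IsOpenMap (Pj d) := by
      have h1 := ContinuousLinearMap.isOpenMap (𝕜 := ℝ)
        (LinearMap.toContinuousLinearMap (Pj d))
        (by rw [LinearMap.coe_toContinuousLinearMap']; exact Pj_surj d)
      rwa [LinearMap.coe_toContinuousLinearMap'] at h1
    have hHopen : IsOpenMap (Hj d) := by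
      have h1 := ContinuousLinearMap.isOpenMap (𝕜 := ℝ)
        (LinearMap.toContinuousLinearMap (Hj d))
        (by rw [LinearMap.coe_toContinuousLinearMap']; exact Hj_surj d)
      rwa [LinearMap.coe_toContinuousLinearMap'] at h1
    set φ : Ed (d+1) → Ed d := fun y => Pj d y - p with hφdef
    have hφc : Continuous φ := hPc.sub continuous_const
    have hφo : IsOpenMap φ := by
      have heq : φ = (fun x : Ed d => x + (-p)) ∘ (Pj d) := by
        funext y; exact sub_eq_add_neg _ _
      rw [heq]
      exact (Homeomorph.addRight (-p)).isOpenMap.comp hPopen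
    set C := closure (msum ℓ K) with hCdef
    have hCi : interior C = ∅ := hKnwd
    set S₂ : Set (Ed (d+1)) := φ ⁻¹' C with hS₂def
    have hS₂cl : IsClosed S₂ := isClosed_closure.preimage hφc
    have hS₂i : interior S₂ = ∅ :=
      hS₂cl.isNowhereDense_iff.mp (nwd_preimage hφc hφo isClosed_closure hCi)
    set Fset : Set ℝ := Nat.cast '' (Set.Iic (ℓ+1)) with hFdef
    have hFfin : Fset.Finite := (Set.finite_Iic _).image _
    have hFi : interior Fset = ∅ :=
      interior_eq_empty_iff_dense_compl.mpr (hFfin.countable.dense_compl ℝ)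
    set S₁ : Set (Ed (d+1)) := Hj d ⁻¹' Fset with hS₁def
    have hS₁cl : IsClosed S₁ := hFfin.isClosed.preimage hHc
    have hS₁i : interior S₁ = ∅ :=
      hS₁cl.isNowhereDense_iff.mp (nwd_preimage hHc hHopen hFfin.isClosed hFi)
    have hsum : msum (ℓ+1) (A ∪ B) ⊆ S₁ ∪ S₂ := by
      rintro y ⟨w, hw, rfl⟩
      by_cases hall : ∀ i, w i ∈ A
      · left
        have hn : ∀ i, ∃ n : ℕ, n ≤ 1 ∧ Hj d (w i) = n := by
          intro i
          have h2 := (hall i).2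
          simp only [mem_preimage, Set.mem_insert_iff, Set.mem_singleton_iff] at h2
          rcases h2 with h | h
          · exact ⟨0, Nat.zero_le 1, by rw [h]; simp⟩
          · exact ⟨1, le_refl 1, by rw [h]; simp⟩
        choose gn hgn1 hgn2 using hn
        show Hj d (∑ i, w i) ∈ Fset
        refine ⟨∑ i, gn i, Set.mem_Iic.mpr ?_, ?_⟩
        · calc ∑ i, gn i ≤ ∑ _i : Fin (ℓ+1), 1 := Finset.sum_le_sum fun i _ => hgn1 i
            _ = ℓ + 1 := by simp
        · rw [map_sum, Nat.cast_sum]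
          exact Finset.sum_congr rfl fun i _ => (hgn2 i).symm
      · right
        push_neg at hall
        obtain ⟨i₀, hi₀⟩ := hall
        have hi₀B : w i₀ ∈ B := (hw i₀).resolve_left hi₀
        have hi₀p : Pj d (w i₀) = p := by
          have := hi₀B.1
          rwa [mem_preimage, Set.mem_singleton_iff] at this
        show φ (∑ i, w i) ∈ C
        have heq : φ (∑ i, w i) = ∑ j : Fin ℓ, Pj d (w (i₀.succAbove j)) := by
          show Pj d (∑ i, w i) - p = _
          rw [map_sum, Fin.sum_univ_succAbove (fun i => Pj d (w i)) i₀, hi₀p]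
          exact add_sub_cancel_left p _
        rw [heq]
        apply subset_closure
        refine ⟨fun j => Pj d (w (i₀.succAbove j)), fun j => ?_, rfl⟩
        show Pj d (w (i₀.succAbove j)) ∈ K
        rcases hw (i₀.succAbove j) with hA' | hB'
        · exact hA'.1
        · have hp' : Pj d (w (i₀.succAbove j)) = p := by
            have := hB'.1
            rwa [mem_preimage, Set.mem_singleton_iff] at this
          rw [hp']; exact hpK
    show interior (closure (msum (ℓ+1) (A ∪ B))) = ∅
    have hclosed : IsClosed (S₁ ∪ S₂) := hS₁cl.union hS₂cl
    have hint : interior (S₁ ∪ S₂) = ∅ := nwd_union hS₁cl hS₂cl hS₁i hS₂i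
    have h1 : closure (msum (ℓ+1) (A ∪ B)) ⊆ S₁ ∪ S₂ := closure_minimal hsum hclosed
    rw [← subset_empty_iff, ← hint]
    exact interior_mono h1
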